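/- Let L ≥ 2 be an integer and n ≥ 2L + 2. A real symmetric n×n matrix A satisfies (a) C_k^⊤AC_k = A for all 0 ≤ k ≤ n−1 (A is circulant), (b) tr(A) = 1, and (c) θ^⊤Aθ = 0 for every θ ∈ Θ_L, if and only if A = Σ_{k=1}^L c_kA_k for some c ∈ ℝ^L with Σ_{k=1}^L c_k = 1 and Σ_{k=1}^L k·c_k = 0. Equivalently, the set of all equivariant unbiased quadratic variance estimators for the model class Θ_L is exactly Q_L = {Σ_{k=1}^L c_kY_k : c ∈ ℝ^L, Σ_{k=1}^L c_k = 1, Σ_{k=1}^L k·c_k = 0}, where Y_k = X^⊤A_kX. -/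

import Mathlib

open Matrix Finset

/-- The minimal length of a maximal set of cyclically consecutive indices on which the
`n`-periodic sequence `θ` is constant (equal to `n` when `θ` is constant). -/
noncomputable def cycMinSeg (n : ℕ) (θ : ℤ → ℝ) : ℕ :=
  sInf ({n} ∪ {d : ℕ | 0 < d ∧ ∃ i : ℤ,
    θ i ≠ θ (i + 1) ∧ θ (i + d) ≠ θ (i + d + 1) ∧
    ∀ e : ℕ, 0 < e → e < d → θ (i + e) = θ (i + e + 1)})

/-- The circulant permutation matrix `C_k` whose `(i,j)` entry is `1` iff `j - i ≡ k (mod n)`. -/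
def Cmat (n : ℕ) [NeZero n] (k : ZMod n) : Matrix (ZMod n) (ZMod n) ℝ :=
  fun i j => if j - i = k then 1 else 0

/-- `A_k = (1/n) (I - C_k/2 - C_kᵀ/2)`. -/
noncomputable def Amat (n : ℕ) [NeZero n] (k : ZMod n) : Matrix (ZMod n) (ZMod n) ℝ :=
  ((n : ℝ))⁻¹ • (1 - (2⁻¹ : ℝ) • Cmat n k - (2⁻¹ : ℝ) • (Cmat n k)ᵀ)

variable {n : ℕ} [NeZero n]

lemma Cmat_apply (k i j : ZMod n) : Cmat n k i j = if j - i = k then 1 else 0 := rfl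

lemma mul_Cmat (A : Matrix (ZMod n) (ZMod n) ℝ) (k i j : ZMod n) :
    (A * Cmat n k) i j = A i (j - k) := by
  rw [mul_apply, Finset.sum_eq_single (j - k)]
  · rw [Cmat_apply, if_pos (by ring), mul_one]
  · intro l _ hl
    rw [Cmat_apply, if_neg (fun h => hl (by rw [← h]; ring)), mul_zero]
  · intro h; exact absurd (Finset.mem_univ _) h

lemma CmatT_mul (A : Matrix (ZMod n) (ZMod n) ℝ) (k i j : ZMod n) :
    ((Cmat n k)ᵀ * A) i j = A (i - k) j := by
  rw [mul_apply, Finset.sum_eq_single (i - k)]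
  · rw [transpose_apply, Cmat_apply, if_pos (by ring), one_mul]
  · intro l _ hl
    rw [transpose_apply, Cmat_apply, if_neg (fun h => hl (by rw [← h]; ring)), zero_mul]
  · intro h; exact absurd (Finset.mem_univ _) h

lemma conj_Cmat (A : Matrix (ZMod n) (ZMod n) ℝ) (k i j : ZMod n) :
    ((Cmat n k)ᵀ * A * Cmat n k) i j = A (i - k) (j - k) := by
  rw [mul_Cmat, CmatT_mul]

lemma Cmat_mulVec (k : ZMod n) (θ : ZMod n → ℝ) (i : ZMod n) :
    (Cmat n k).mulVec θ i = θ (i + k) := by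
  rw [mulVec, dotProduct, Finset.sum_eq_single (i + k)]
  · rw [Cmat_apply, if_pos (by ring), one_mul]
  · intro l _ hl
    rw [Cmat_apply, if_neg (fun h => hl (by rw [← h]; ring)), zero_mul]
  · intro h; exact absurd (Finset.mem_univ _) h

lemma CmatT_mulVec (k : ZMod n) (θ : ZMod n → ℝ) (i : ZMod n) :
    (Cmat n k)ᵀ.mulVec θ i = θ (i - k) := by
  rw [mulVec, dotProduct, Finset.sum_eq_single (i - k)]
  · rw [transpose_apply, Cmat_apply, if_pos (by ring), one_mul]
  · intro l _ hl
    rw [transpose_apply, Cmat_apply, if_neg (fun h => hl (by rw [← h]; ring)), zero_mul]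
  · intro h; exact absurd (Finset.mem_univ _) h

lemma sum_shift (f : ZMod n → ℝ) (c : ZMod n) : ∑ x : ZMod n, f (x + c) = ∑ x : ZMod n, f x :=
  Fintype.sum_equiv (Equiv.addRight c) _ _ (fun x => rfl)

lemma quad_Amat (k : ZMod n) (θ : ZMod n → ℝ) :
    θ ⬝ᵥ (Amat n k).mulVec θ = (2 * (n : ℝ))⁻¹ * ∑ x : ZMod n, (θ x - θ (x + k))^2 := by
  have e1 : (fun i => θ (i + k)) = (Cmat n k).mulVec θ := funext fun i => (Cmat_mulVec k θ i).symm
  have e2 : (fun i => θ (i - k)) = (Cmat n k)ᵀ.mulVec θ := funext fun i => (CmatT_mulVec k θ i).symm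
  have hmv : (Amat n k).mulVec θ =
      ((n : ℝ))⁻¹ • (θ - (2⁻¹ : ℝ) • (fun i => θ (i + k)) - (2⁻¹ : ℝ) • (fun i => θ (i - k))) := by
    unfold Amat
    rw [e1, e2, smul_mulVec, sub_mulVec, sub_mulVec, one_mulVec, smul_mulVec,
      smul_mulVec]
  rw [hmv, dotProduct_smul, dotProduct_sub, dotProduct_sub, dotProduct_smul, dotProduct_smul]
  have h1 : θ ⬝ᵥ (fun i => θ (i - k)) = ∑ x : ZMod n, θ x * θ (x + k) := by
    rw [dotProduct]
    rw [← sum_shift (fun x => θ x * θ (x - k)) k]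
    have : ∀ x : ZMod n, θ (x + k) * θ (x + k - k) = θ x * θ (x + k) := by
      intro x; rw [add_sub_cancel_right]; ring
    exact Finset.sum_congr rfl fun x _ => this x
  have h2 : θ ⬝ᵥ (fun i => θ (i + k)) = ∑ x : ZMod n, θ x * θ (x + k) := rfl
  have h3 : θ ⬝ᵥ θ = ∑ x : ZMod n, θ x * θ x := rfl
  have h5 : ∑ x : ZMod n, (θ (x + k) * θ (x + k)) = ∑ x : ZMod n, θ x * θ x :=
    sum_shift (fun x => θ x * θ x) k
  have h4 : ∑ x : ZMod n, (θ x - θ (x + k))^2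
      = 2 * (∑ x : ZMod n, θ x * θ x) - 2 * ∑ x : ZMod n, (θ x * θ (x + k)) := by
    have : ∑ x : ZMod n, (θ x - θ (x + k))^2
        = ∑ x : ZMod n, (θ x * θ x - 2 * (θ x * θ (x + k)) + θ (x + k) * θ (x + k)) :=
      Finset.sum_congr rfl fun x _ => by ring
    rw [this, Finset.sum_add_distrib, Finset.sum_sub_distrib, ← Finset.mul_sum, h5]
    ring
  have hn : (n : ℝ) ≠ 0 := Nat.cast_ne_zero.2 (NeZero.ne n)
  rw [h1, h2, h3, h4]
  set S1 := ∑ x : ZMod n, θ x * θ x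
  set S2 := ∑ x : ZMod n, θ x * θ (x + k)
  field_simp
  have hnn : (n:ℝ) * (n:ℝ)⁻¹ = 1 := mul_inv_cancel₀ hn
  linear_combination (S1 - S2) * hnn

lemma Amat_apply (k i j : ZMod n) :
    Amat n k i j = (n : ℝ)⁻¹ * ((if i = j then (1:ℝ) else 0)
      - 2⁻¹ * (if j - i = k then 1 else 0) - 2⁻¹ * (if i - j = k then 1 else 0)) := by
  simp only [Amat, Matrix.smul_apply, Matrix.sub_apply, Matrix.one_apply,
    Matrix.transpose_apply, Cmat_apply, smul_eq_mul]

lemma Amat_isSymm (k : ZMod n) : (Amat n k).IsSymm := by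
  ext i j
  rw [Matrix.transpose_apply, Amat_apply, Amat_apply]
  rw [show (if j = i then (1:ℝ) else 0) = (if i = j then (1:ℝ) else 0) by
    simp [eq_comm]]
  ring

lemma Amat_conj (c k : ZMod n) : (Cmat n c)ᵀ * Amat n k * Cmat n c = Amat n k := by
  ext i j
  rw [conj_Cmat, Amat_apply, Amat_apply]
  simp only [show j - c - (i - c) = j - i from by ring,
    show i - c - (j - c) = i - j from by ring, sub_left_inj]

lemma Amat_trace (k : ZMod n) (hk : k ≠ 0) : (Amat n k).trace = 1 := by
  rw [Matrix.trace]
  have : ∀ i : ZMod n, (Amat n k).diag i = (n : ℝ)⁻¹ := by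
    intro i
    rw [Matrix.diag_apply, Amat_apply, if_pos rfl,
      if_neg (show ¬ (i - i = k) by simpa using fun h => hk h.symm)]
    ring
  rw [Finset.sum_congr rfl fun i _ => this i, Finset.sum_const, Finset.card_univ,
    ZMod.card, nsmul_eq_mul]
  exact mul_inv_cancel₀ (Nat.cast_ne_zero.2 (NeZero.ne n))

/-- Jumps of a `Θ_L` sequence are at least `L` apart. -/
lemma sep {L : ℕ} (θ : ZMod n → ℝ)
    (hθ : L ≤ cycMinSeg n (fun i : ℤ => θ (i : ZMod n)))
    (x : ZMod n) (e : ℕ) (he : 0 < e) (heL : e < L)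
    (h1 : θ x ≠ θ (x + 1)) (h2 : θ (x + (e : ZMod n)) ≠ θ (x + (e : ZMod n) + 1)) : False := by
  set θ' : ℤ → ℝ := fun i : ℤ => θ (i : ZMod n) with hθ'
  obtain ⟨i₀, hi₀⟩ : ∃ i₀ : ℤ, (i₀ : ZMod n) = x := ⟨(x.val : ℤ), by simp [ZMod.intCast_cast,
    ZMod.natCast_val, ZMod.cast_id]⟩
  have hJ : ∃ d : ℕ, 0 < d ∧ θ' (i₀ + d) ≠ θ' (i₀ + d + 1) := by
    refine ⟨e, he, ?_⟩
    have : ((i₀ + (e:ℕ) : ℤ) : ZMod n) = x + (e : ZMod n) := by push_cast [hi₀]; ring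
    simpa [hθ', this, show ((i₀ + (e:ℕ) + 1 : ℤ) : ZMod n) = x + (e : ZMod n) + 1 by
      push_cast [hi₀]; ring] using h2
  classical
  let d₀ := Nat.find hJ
  have hd₀ := Nat.find_spec hJ
  have hmem : d₀ ∈ ({n} ∪ {d : ℕ | 0 < d ∧ ∃ i : ℤ,
      θ' i ≠ θ' (i + 1) ∧ θ' (i + d) ≠ θ' (i + d + 1) ∧
      ∀ e : ℕ, 0 < e → e < d → θ' (i + e) = θ' (i + e + 1)} : Set ℕ) := by
    refine Set.mem_union_right _ ⟨hd₀.1, i₀, ?_, hd₀.2, ?_⟩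
    · simpa [hθ', hi₀, show ((i₀ + 1 : ℤ) : ZMod n) = x + 1 by push_cast [hi₀]; ring] using h1
    · intro e' he' hlt
      by_contra hne
      exact Nat.find_min hJ hlt ⟨he', hne⟩
  have : cycMinSeg n θ' ≤ d₀ := Nat.sInf_le hmem
  have hde : d₀ ≤ e := Nat.find_min' hJ ⟨he, by
    have h1' : ((i₀ + (e:ℕ) : ℤ) : ZMod n) = x + (e : ZMod n) := by push_cast [hi₀]; ring
    have h2' : ((i₀ + (e:ℕ) + 1 : ℤ) : ZMod n) = x + (e : ZMod n) + 1 := by push_cast [hi₀]; ring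
    simpa [hθ', h1', h2'] using h2⟩
  omega

lemma sq_sum_subsingleton {s : Finset ℕ} (x : ℕ → ℝ)
    (h : ∀ e ∈ s, ∀ f ∈ s, x e ≠ 0 → x f ≠ 0 → e = f) :
    (∑ e ∈ s, x e)^2 = ∑ e ∈ s, (x e)^2 := by
  rw [sq, Finset.sum_mul_sum]
  refine Finset.sum_congr rfl fun e he => ?_
  by_cases hx : x e = 0
  · simp [hx]
  · rw [Finset.sum_eq_single e]
    · rw [sq]
    · intro f hf hfe
      by_cases hxf : x f = 0
      · rw [hxf, mul_zero]
      · exact absurd (h e he f hf hx hxf) (by exact fun hh => hfe hh.symm)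
    · intro hh; exact absurd he hh

lemma key_sum {L : ℕ} (θ : ZMod n → ℝ)
    (hθ : L ≤ cycMinSeg n (fun i : ℤ => θ (i : ZMod n)))
    (m : ℕ) (hm1 : 1 ≤ m) (hmL : m ≤ L) :
    ∑ x : ZMod n, (θ x - θ (x + (m : ZMod n)))^2
      = m * ∑ x : ZMod n, (θ x - θ (x + 1))^2 := by
  have tel : ∀ x : ZMod n, θ x - θ (x + (m : ZMod n))
      = - ∑ e ∈ Finset.range m, (θ (x + ((e+1 : ℕ) : ZMod n)) - θ (x + ((e : ℕ) : ZMod n))) := by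
    intro x
    rw [Finset.sum_range_sub (fun e => θ (x + ((e : ℕ) : ZMod n)))]
    simp
  have atmost : ∀ x : ZMod n, ∀ e ∈ Finset.range m, ∀ f ∈ Finset.range m,
      (θ (x + ((e+1 : ℕ) : ZMod n)) - θ (x + ((e : ℕ) : ZMod n))) ≠ 0 →
      (θ (x + ((f+1 : ℕ) : ZMod n)) - θ (x + ((f : ℕ) : ZMod n))) ≠ 0 → e = f := by
    intro x e he f hf hxe hxf
    rw [Finset.mem_range] at he hf
    by_contra hef
    -- wlog e < f
    rcases Nat.lt_or_ge e f with hlt | hge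
    · refine sep θ hθ (x + (e : ZMod n)) (f - e) (by omega) (by omega) ?_ ?_
      · intro hc; apply hxe
        rw [show ((e+1:ℕ) : ZMod n) = (e : ZMod n) + 1 by push_cast; ring, ← add_assoc, hc]
        ring
      · intro hc; apply hxf
        have hcast : x + (e : ZMod n) + ((f - e : ℕ) : ZMod n) = x + (f : ZMod n) := by
          rw [Nat.cast_sub hlt.le]; ring
        rw [hcast] at hc
        rw [show ((f+1:ℕ) : ZMod n) = (f : ZMod n) + 1 by push_cast; ring, ← add_assoc, hc]
        ring
    · have hlt : f < e := by omega
      refine sep θ hθ (x + (f : ZMod n)) (e - f) (by omega) (by omega) ?_ ?_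
      · intro hc; apply hxf
        rw [show ((f+1:ℕ) : ZMod n) = (f : ZMod n) + 1 by push_cast; ring, ← add_assoc, hc]
        ring
      · intro hc; apply hxe
        have hcast : x + (f : ZMod n) + ((e - f : ℕ) : ZMod n) = x + (e : ZMod n) := by
          rw [Nat.cast_sub hlt.le]; ring
        rw [hcast] at hc
        rw [show ((e+1:ℕ) : ZMod n) = (e : ZMod n) + 1 by push_cast; ring, ← add_assoc, hc]
        ring
  have step1 : ∀ x : ZMod n, (θ x - θ (x + (m : ZMod n)))^2
      = ∑ e ∈ Finset.range m, (θ (x + ((e+1 : ℕ) : ZMod n)) - θ (x + ((e : ℕ) : ZMod n)))^2 := by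
    intro x
    rw [tel x, neg_sq]
    exact sq_sum_subsingleton _ (atmost x)
  rw [Finset.sum_congr rfl fun x _ => step1 x, Finset.sum_comm]
  have step2 : ∀ e : ℕ, ∑ x : ZMod n,
      (θ (x + ((e+1 : ℕ) : ZMod n)) - θ (x + ((e : ℕ) : ZMod n)))^2
      = ∑ x : ZMod n, (θ x - θ (x + 1))^2 := by
    intro e
    rw [← sum_shift (fun y => (θ y - θ (y + 1))^2) ((e : ℕ) : ZMod n)]
    refine Finset.sum_congr rfl fun x _ => ?_
    rw [show ((e+1:ℕ) : ZMod n) = (e : ZMod n) + 1 by push_cast; ring, ← add_assoc]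
    ring
  rw [Finset.sum_congr rfl fun e _ => step2 e, Finset.sum_const, Finset.card_range,
    nsmul_eq_mul]

lemma Icc_sum_eq_range (L : ℕ) (f : ℕ → ℝ) : ∑ d ∈ Finset.Icc 1 L, f d = ∑ i ∈ Finset.range L, f (1 + i) := by
  rw [show Finset.Icc 1 L = Finset.Ico 1 (L+1) by rw [Finset.Ico_add_one_right_eq_Icc],
    Finset.sum_Ico_eq_sum_range]
  simp

lemma quad_sum {ι : Type*} (s : Finset ι) (c : ι → ℝ) (M : ι → Matrix (ZMod n) (ZMod n) ℝ)
    (X : ZMod n → ℝ) :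
    X ⬝ᵥ (∑ k ∈ s, c k • M k).mulVec X = ∑ k ∈ s, c k * (X ⬝ᵥ (M k).mulVec X) := by
  have expand : ∀ N : Matrix (ZMod n) (ZMod n) ℝ,
      X ⬝ᵥ N.mulVec X = ∑ i : ZMod n, ∑ j : ZMod n, X i * (N i j * X j) := by
    intro N
    rw [dotProduct]
    exact Finset.sum_congr rfl fun i _ => by rw [mulVec, dotProduct, Finset.mul_sum]
  rw [expand]
  have : ∀ i j : ZMod n, X i * ((∑ k ∈ s, c k • M k) i j * X j)
      = ∑ k ∈ s, c k * (X i * (M k i j * X j)) := by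
    intro i j
    rw [Matrix.sum_apply, Finset.sum_mul, Finset.mul_sum]
    exact Finset.sum_congr rfl fun k _ => by rw [Matrix.smul_apply, smul_eq_mul]; ring
  rw [Finset.sum_congr rfl fun i _ => Finset.sum_congr rfl fun j _ => this i j]
  rw [Finset.sum_congr rfl fun i (_ : i ∈ (Finset.univ : Finset (ZMod n))) => Finset.sum_comm]
  rw [Finset.sum_comm]
  refine Finset.sum_congr rfl fun k _ => ?_
  rw [expand, Finset.mul_sum]
  exact Finset.sum_congr rfl fun i _ => by rw [Finset.mul_sum]

lemma cast_eq_iff_lt {a b : ℕ} (ha : a < n) (hb : b < n) : ((a : ZMod n) = b) ↔ a = b := by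
  constructor
  · intro h
    rw [← ZMod.val_cast_of_lt ha, ← ZMod.val_cast_of_lt hb, h]
  · intro h; rw [h]

lemma cast_ne_zero_lt {a : ℕ} (ha : a < n) (h0 : 0 < a) : ((a : ZMod n) : ZMod n) ≠ 0 := by
  intro h
  have := (cast_eq_iff_lt ha (Nat.pos_of_ne_zero (NeZero.ne n))).1 (by simpa using h)
  omega

section Suff
variable {L : ℕ}

lemma suff_symm (c : Fin L → ℝ) :
    (∑ k : Fin L, c k • Amat n (((k : ℕ) + 1 : ℕ) : ZMod n)).IsSymm := by
  unfold Matrix.IsSymm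
  rw [Matrix.transpose_sum]
  refine Finset.sum_congr rfl fun k _ => ?_
  rw [Matrix.transpose_smul, Amat_isSymm]

lemma suff_conj (c : Fin L → ℝ) (j : ZMod n) :
    (Cmat n j)ᵀ * (∑ k : Fin L, c k • Amat n (((k : ℕ) + 1 : ℕ) : ZMod n)) * Cmat n j
      = ∑ k : Fin L, c k • Amat n (((k : ℕ) + 1 : ℕ) : ZMod n) := by
  rw [Matrix.mul_sum, Matrix.sum_mul]
  refine Finset.sum_congr rfl fun k _ => ?_
  rw [Matrix.mul_smul, Matrix.smul_mul, Amat_conj]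

lemma suff_trace (hLn : L < n) (c : Fin L → ℝ) (hc : ∑ k : Fin L, c k = 1) :
    (∑ k : Fin L, c k • Amat n (((k : ℕ) + 1 : ℕ) : ZMod n)).trace = 1 := by
  rw [Matrix.trace_sum]
  rw [Finset.sum_congr rfl fun k (_ : k ∈ Finset.univ) => Matrix.trace_smul (c k) _]
  rw [Finset.sum_congr rfl fun k (_ : k ∈ (Finset.univ : Finset (Fin L))) => by
    rw [Amat_trace _ (cast_ne_zero_lt (by omega) (by omega))]]
  simpa using hc

lemma suff_unbiased (hLn : L < n) (c : Fin L → ℝ)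
    (hc2 : ∑ k : Fin L, ((k : ℕ) + 1 : ℝ) * c k = 0)
    (θ : ZMod n → ℝ) (hθ : L ≤ cycMinSeg n (fun i : ℤ => θ (i : ZMod n))) :
    θ ⬝ᵥ (∑ k : Fin L, c k • Amat n (((k : ℕ) + 1 : ℕ) : ZMod n)).mulVec θ = 0 := by
  rw [quad_sum]
  have : ∀ k : Fin L, c k * (θ ⬝ᵥ (Amat n (((k : ℕ) + 1 : ℕ) : ZMod n)).mulVec θ)
      = (((k : ℕ) + 1 : ℝ) * c k) * ((2 * (n:ℝ))⁻¹ * ∑ x : ZMod n, (θ x - θ (x + 1))^2) := by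
    intro k
    rw [quad_Amat, key_sum θ hθ ((k : ℕ) + 1) (by omega) (by omega)]
    push_cast
    ring
  rw [Finset.sum_congr rfl fun k _ => this k, ← Finset.sum_mul, hc2, zero_mul]

end Suff

/-- indicator of `[0, m)` -/
noncomputable def θind (n m : ℕ) [NeZero n] : ZMod n → ℝ := fun x => if x.val < m then 1 else 0

lemma sum_indicator (f : ZMod n → ℝ) (m : ℕ) (hm : m ≤ n) :
    ∑ x : ZMod n, (if x.val < m then f x else 0) = ∑ p ∈ Finset.range m, f ((p : ℕ) : ZMod n) := by
  rw [← Finset.sum_filter]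
  refine Finset.sum_nbij' (fun x => x.val) (fun p => ((p : ℕ) : ZMod n)) ?_ ?_ ?_ ?_ ?_
  · intro x hx
    rw [Finset.mem_filter] at hx
    exact Finset.mem_range.2 hx.2
  · intro p hp
    rw [Finset.mem_range] at hp
    exact Finset.mem_filter.2 ⟨Finset.mem_univ _, by rw [ZMod.val_cast_of_lt (by omega)]; omega⟩
  · intro x _; exact ZMod.natCast_rightInverse x
  · intro p hp; rw [Finset.mem_range] at hp; exact ZMod.val_cast_of_lt (by omega)
  · intro x _; rw [ZMod.natCast_rightInverse x]

lemma ind_jump (m : ℕ) (hm1 : 1 ≤ m) (hmn : m < n) (x : ZMod n) :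
    θind n m x ≠ θind n m (x + 1) ↔ (x = ((m - 1 : ℕ) : ZMod n) ∨ x = (-1 : ZMod n)) := by
  have hxval : x = ((x.val : ℕ) : ZMod n) := (ZMod.natCast_rightInverse x).symm
  have hxlt : x.val < n := ZMod.val_lt x
  have hneg : (-1 : ZMod n) = ((n - 1 : ℕ) : ZMod n) := by
    have : ((n : ℕ) : ZMod n) = 0 := ZMod.natCast_self n
    rw [Nat.cast_sub (by omega), this]; ring
  by_cases hend : x.val = n - 1
  · have hx1 : x + 1 = 0 := by
      rw [hxval, hend, show ((n - 1 : ℕ) : ZMod n) + 1 = (((n - 1) + 1 : ℕ) : ZMod n) from by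
        push_cast; ring, show n - 1 + 1 = n from by omega, ZMod.natCast_self]
    have : θind n m x = 0 := by
      unfold θind; rw [if_neg (by omega)]
    have h2 : θind n m (x + 1) = 1 := by
      unfold θind; rw [hx1, if_pos (by rw [ZMod.val_zero]; omega)]
    constructor
    · intro _; right; rw [hneg, hxval, hend]
    · intro _; rw [this, h2]; norm_num
  · have hval1 : (x + 1).val = x.val + 1 := by
      rw [hxval, ← Nat.cast_one, ← Nat.cast_add, ZMod.val_cast_of_lt (by omega),
        ZMod.val_cast_of_lt (by omega)]
    have hrhs : (x = ((m - 1 : ℕ) : ZMod n) ∨ x = (-1 : ZMod n)) ↔ x.val = m - 1 := by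
      constructor
      · rintro (h | h)
        · rw [hxval] at h; exact (cast_eq_iff_lt hxlt (by omega)).1 h
        · rw [hneg, hxval] at h
          exact absurd ((cast_eq_iff_lt hxlt (by omega)).1 h) hend
      · intro h; left; rw [hxval, h]
    rw [hrhs]
    unfold θind
    rw [hval1]
    by_cases h1 : x.val < m <;> by_cases h2 : x.val + 1 < m <;>
      simp [h1, h2] <;> omega

lemma ind_cyc {L : ℕ} (m : ℕ) (hL : 2 ≤ L) (hLm : L ≤ m) (hmn : m ≤ n - L) (hn : 2*L+2 ≤ n) :
    L ≤ cycMinSeg n (fun i : ℤ => θind n m (i : ZMod n)) := by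
  have hm1 : 1 ≤ m := by omega
  have hmn' : m < n := by omega
  refine le_csInf ⟨n, Set.mem_union_left _ rfl⟩ ?_
  rintro d (hd | ⟨hd0, i, hj1, hj2, -⟩)
  · rw [Set.mem_singleton_iff] at hd; omega
  · by_contra hdL
    push_neg at hdL
    have hdn : d < n := by omega
    set x : ZMod n := (i : ZMod n) with hx
    have hcast1 : ((i + 1 : ℤ) : ZMod n) = x + 1 := by push_cast; ring
    have hcast2 : ((i + (d:ℕ) : ℤ) : ZMod n) = x + ((d : ℕ) : ZMod n) := by push_cast; ring
    have hcast3 : ((i + (d:ℕ) + 1 : ℤ) : ZMod n) = x + ((d : ℕ) : ZMod n) + 1 := by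
      push_cast; ring
    have hj1' : θind n m x ≠ θind n m (x + 1) := by
      simpa [hcast1] using hj1
    have hj2' : θind n m (x + ((d:ℕ) : ZMod n)) ≠ θind n m (x + ((d:ℕ) : ZMod n) + 1) := by
      simpa [hcast2, hcast3] using hj2
    have hA := (ind_jump m hm1 hmn' x).1 hj1'
    have hB := (ind_jump m hm1 hmn' _).1 hj2'
    have hneg : (-1 : ZMod n) = ((n - 1 : ℕ) : ZMod n) := by
      rw [Nat.cast_sub (by omega), ZMod.natCast_self]; ring
    -- derive (d : ZMod n) value
    rcases hA with hA | hA <;> rcases hB with hB | hB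
    · have h0 : x + (d : ZMod n) = x + 0 := by rw [add_zero, hB, ← hA]
      have : ((d : ℕ) : ZMod n) = ((0 : ℕ) : ZMod n) := by
        simpa using add_left_cancel h0
      have := (cast_eq_iff_lt hdn (by omega)).1 this
      omega
    · -- x = m-1, x+d = n-1 : d = n-m
      have h' : ((d : ℕ) : ZMod n) = ((n - m : ℕ) : ZMod n) := by
        have : x + (d : ZMod n) = ((n-1 : ℕ) : ZMod n) := by rw [hB, hneg]
        rw [hA] at this
        have : ((m - 1 : ℕ) : ZMod n) + (d : ZMod n) = ((n - 1 : ℕ) : ZMod n) := this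
        have hgoal : (d : ZMod n) = ((n-1 : ℕ) : ZMod n) - ((m-1:ℕ) : ZMod n) := by
          rw [← this]; ring
        rw [hgoal, Nat.cast_sub (by omega), Nat.cast_sub (by omega), Nat.cast_sub (by omega)]
        push_cast
        ring
      have := (cast_eq_iff_lt hdn (by omega)).1 h'
      omega
    · -- x = n-1, x+d = m-1 : d = m
      have h' : ((d : ℕ) : ZMod n) = ((m : ℕ) : ZMod n) := by
        have : x + (d : ZMod n) = ((m-1 : ℕ) : ZMod n) := hB
        rw [hA, hneg] at this
        have hgoal : (d : ZMod n) = ((m-1 : ℕ) : ZMod n) - ((n-1:ℕ) : ZMod n) := by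
          rw [← this]; ring
        rw [hgoal, Nat.cast_sub (by omega), Nat.cast_sub (by omega)]
        rw [ZMod.natCast_self]
        push_cast
        ring
      have := (cast_eq_iff_lt hdn (by omega)).1 h'
      omega
    · have h0 : x + (d : ZMod n) = x + 0 := by rw [add_zero, hB, ← hA]
      have : ((d : ℕ) : ZMod n) = ((0 : ℕ) : ZMod n) := by
        simpa using add_left_cancel h0
      have := (cast_eq_iff_lt hdn (by omega)).1 this
      omega

lemma quad_ind (A : Matrix (ZMod n) (ZMod n) ℝ) (a : ZMod n → ℝ)
    (hcirc : ∀ i j, A i j = a (j - i)) (m : ℕ) (hm : m ≤ n) :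
    θind n m ⬝ᵥ A.mulVec (θind n m)
      = ∑ p ∈ Finset.range m, ∑ q ∈ Finset.range m, a (((q : ℕ) : ZMod n) - ((p : ℕ) : ZMod n)) := by
  have hin : ∀ x : ZMod n, A.mulVec (θind n m) x = ∑ y : ZMod n, (if y.val < m then a (y - x) else 0) := by
    intro x
    rw [mulVec, dotProduct]
    refine Finset.sum_congr rfl fun y _ => ?_
    rw [hcirc x y]
    unfold θind
    by_cases h : y.val < m <;> simp [h]
  have houter : θind n m ⬝ᵥ A.mulVec (θind n m)
      = ∑ x : ZMod n, (if x.val < m then (∑ y : ZMod n, (if y.val < m then a (y - x) else 0)) else 0) := by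
    rw [dotProduct]
    refine Finset.sum_congr rfl fun x _ => ?_
    rw [hin x]
    unfold θind
    by_cases h : x.val < m <;> simp [h]
  rw [houter, sum_indicator _ m hm]
  exact Finset.sum_congr rfl fun p _ => sum_indicator (fun y => a (y - ((p:ℕ) : ZMod n))) m hm

lemma necessity {L : ℕ} (hL : 2 ≤ L) (hn : 2*L+2 ≤ n)
    (A : Matrix (ZMod n) (ZMod n) ℝ) (hsymm : A.IsSymm)
    (hconj : ∀ k : ZMod n, (Cmat n k)ᵀ * A * Cmat n k = A) (htr : A.trace = 1)
    (hunb : ∀ θ : ZMod n → ℝ, L ≤ cycMinSeg n (fun i : ℤ => θ (i : ZMod n)) →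
      θ ⬝ᵥ A.mulVec θ = 0) :
    ∃ c : Fin L → ℝ, (∑ k : Fin L, c k = 1) ∧
      (∑ k : Fin L, ((k : ℕ) + 1 : ℝ) * c k = 0) ∧
      A = ∑ k : Fin L, c k • Amat n (((k : ℕ) + 1 : ℕ) : ZMod n) := by
  have hnR : (n : ℝ) ≠ 0 := Nat.cast_ne_zero.2 (NeZero.ne n)
  set a : ZMod n → ℝ := fun t => A 0 t with ha
  have hcirc : ∀ i j, A i j = a (j - i) := by
    intro i j
    have h1 : ((Cmat n i)ᵀ * A * Cmat n i) i j = A i j := by rw [hconj i]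
    rw [conj_Cmat, sub_self] at h1
    exact h1.symm
  have hsymm' : ∀ t, a (-t) = a t := by
    intro t
    have h1 : A 0 (-t) = A (-t) 0 := by
      conv_lhs => rw [← hsymm]
      rfl
    have h2 : A (-t) 0 = a (0 - (-t)) := hcirc _ _
    simpa using h1.trans h2
  have ha0 : a 0 = (n : ℝ)⁻¹ := by
    have h1 : A.trace = ∑ i : ZMod n, a 0 := by
      rw [Matrix.trace]
      exact Finset.sum_congr rfl fun i _ => by
        rw [Matrix.diag_apply, hcirc i i, sub_self]
    rw [htr] at h1
    rw [Finset.sum_const, Finset.card_univ, ZMod.card, nsmul_eq_mul] at h1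
    field_simp
    linarith
  set Qf : ℕ → ℝ := fun m => ∑ p ∈ Finset.range m, ∑ q ∈ Finset.range m,
    a (((q : ℕ) : ZMod n) - ((p : ℕ) : ZMod n)) with hQf
  set T : ℕ → ℝ := fun m => ∑ d ∈ Finset.Icc 1 m, a ((d : ℕ) : ZMod n) with hT
  have hQ : ∀ m, L ≤ m → m ≤ n - L → Qf m = 0 := by
    intro m h1 h2
    have hmn : m ≤ n := by omega
    have hgoal : Qf m = θind n m ⬝ᵥ A.mulVec (θind n m) := (quad_ind A a hcirc m hmn).symm
    rw [hgoal]
    exact hunb _ (ind_cyc m hL h1 h2 hn)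
  have hshift : ∀ m : ℕ, ∑ p ∈ Finset.range m, a (((m : ℕ) : ZMod n) - ((p : ℕ) : ZMod n)) = T m := by
    intro m
    rw [hT]
    refine Finset.sum_nbij' (fun p => m - p) (fun d => m - d) ?_ ?_ ?_ ?_ ?_
    · intro p hp; rw [Finset.mem_range] at hp; rw [Finset.mem_Icc]; omega
    · intro d hd; rw [Finset.mem_Icc] at hd; rw [Finset.mem_range]; omega
    · intro p hp; rw [Finset.mem_range] at hp; omega
    · intro d hd; rw [Finset.mem_Icc] at hd; omega
    · intro p hp; rw [Finset.mem_range] at hp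
      rw [Nat.cast_sub (by omega : p ≤ m)]
  have hrec : ∀ m : ℕ, Qf (m+1) = Qf m + a 0 + 2 * T m := by
    intro m
    have hgoal : Qf (m+1) = ∑ p ∈ Finset.range (m+1), ∑ q ∈ Finset.range (m+1),
        a (((q : ℕ) : ZMod n) - ((p : ℕ) : ZMod n)) := rfl
    rw [hgoal, Finset.sum_range_succ]
    rw [Finset.sum_congr rfl fun p (_ : p ∈ Finset.range m) =>
      Finset.sum_range_succ (fun q => a (((q : ℕ) : ZMod n) - ((p : ℕ) : ZMod n))) m]
    rw [Finset.sum_range_succ (fun q => a (((q : ℕ) : ZMod n) - ((m : ℕ) : ZMod n))) m]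
    rw [Finset.sum_add_distrib]
    have e1 : ∑ q ∈ Finset.range m, a (((q : ℕ) : ZMod n) - ((m : ℕ) : ZMod n)) = T m := by
      rw [← hshift m]
      refine Finset.sum_congr rfl fun q _ => ?_
      rw [← hsymm' (((q : ℕ) : ZMod n) - ((m : ℕ) : ZMod n)), neg_sub]
    rw [e1, hshift m, sub_self]
    ring
  have hR : ∀ m, L ≤ m → m + 1 ≤ n - L → a 0 + 2 * T m = 0 := by
    intro m h1 h2
    have := hrec m
    rw [hQ m h1 (by omega), hQ (m+1) (by omega) h2] at this
    linarith
  have hTL : T L = -(a 0) / 2 := by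
    have := hR L le_rfl (by omega)
    linarith
  have hvan : ∀ d, L < d → d ≤ n - L - 1 → a ((d : ℕ) : ZMod n) = 0 := by
    intro d h1 h2
    obtain ⟨m, rfl⟩ : ∃ m, d = m + 1 := ⟨d - 1, by omega⟩
    have e1 := hR m (by omega) (by omega)
    have e2 := hR (m+1) (by omega) (by omega)
    have e3 : T (m+1) = T m + a (((m+1 : ℕ) : ZMod n)) := by
      rw [hT]
      exact Finset.sum_Icc_succ_top (by omega) _
    rw [e3] at e2
    linarith
  have hUrec : ∀ m : ℕ, Qf m = m * a 0 + 2 * ∑ d ∈ Finset.Icc 1 m, ((m - d : ℕ) : ℝ) * a ((d : ℕ) : ZMod n) := by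
    intro m
    induction m with
    | zero => simp [hQf]
    | succ m ih =>
      rw [hrec m, ih]
      have e1 : ∑ d ∈ Finset.Icc 1 (m+1), ((m + 1 - d : ℕ) : ℝ) * a ((d : ℕ) : ZMod n)
          = ∑ d ∈ Finset.Icc 1 m, ((m - d : ℕ) : ℝ) * a ((d : ℕ) : ZMod n) + T m := by
        rw [Finset.sum_Icc_succ_top (by omega), Nat.sub_self, Nat.cast_zero, zero_mul, add_zero,
          hT]
        rw [← Finset.sum_add_distrib]
        refine Finset.sum_congr rfl fun d hd => ?_
        rw [Finset.mem_Icc] at hd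
        have : ((m + 1 - d : ℕ) : ℝ) = ((m - d : ℕ) : ℝ) + 1 := by
          rw [show m + 1 - d = (m - d) + 1 from by omega]
          push_cast; ring
        rw [this]; ring
      rw [e1]
      push_cast
      ring
  have hsum2 : ∑ d ∈ Finset.Icc 1 L, (d : ℝ) * a ((d : ℕ) : ZMod n) = 0 := by
    have hQL := hQ L le_rfl (by omega)
    rw [hUrec L] at hQL
    have e1 : ∑ d ∈ Finset.Icc 1 L, (d : ℝ) * a ((d : ℕ) : ZMod n)
        = (L : ℝ) * T L - ∑ d ∈ Finset.Icc 1 L, ((L - d : ℕ) : ℝ) * a ((d : ℕ) : ZMod n) := by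
      rw [hT, Finset.mul_sum, ← Finset.sum_sub_distrib]
      refine Finset.sum_congr rfl fun d hd => ?_
      rw [Finset.mem_Icc] at hd
      have : ((L - d : ℕ) : ℝ) = (L : ℝ) - (d : ℝ) := by
        rw [Nat.cast_sub hd.2]
      rw [this]; ring
    rw [e1, hTL]
    linarith
  have e1 : ∑ k : Fin L, a (((k : ℕ) + 1 : ℕ) : ZMod n) = T L := by
    rw [Fin.sum_univ_eq_sum_range (fun k => a (((k + 1 : ℕ) : ZMod n)))]
    rw [show T L = ∑ d ∈ Finset.Icc 1 L, a ((d : ℕ) : ZMod n) from rfl, Icc_sum_eq_range]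
    exact Finset.sum_congr rfl fun i _ => by rw [add_comm 1 i]
  have hc1' : ∑ k : Fin L, (-(2*(n:ℝ)) * a (((k : ℕ) + 1 : ℕ) : ZMod n)) = 1 := by
    rw [← Finset.mul_sum, e1, hTL, ha0]
    field_simp
  have hc2' : ∑ k : Fin L, ((k : ℕ) + 1 : ℝ) * (-(2*(n:ℝ)) * a (((k : ℕ) + 1 : ℕ) : ZMod n)) = 0 := by
    have e2 : ∑ k : Fin L, ((k : ℕ) + 1 : ℝ) * (-(2*(n:ℝ)) * a (((k : ℕ) + 1 : ℕ) : ZMod n))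
        = ∑ d ∈ Finset.Icc 1 L, (d : ℝ) * (-(2*(n:ℝ)) * a ((d : ℕ) : ZMod n)) := by
      rw [Fin.sum_univ_eq_sum_range (fun k => ((k : ℕ) + 1 : ℝ) * (-(2*(n:ℝ)) * a (((k + 1 : ℕ) : ZMod n))))]
      rw [Icc_sum_eq_range L (fun d => (d : ℝ) * (-(2*(n:ℝ)) * a ((d : ℕ) : ZMod n)))]
      refine Finset.sum_congr rfl fun i _ => ?_
      rw [add_comm 1 i]
      push_cast
      ring
    rw [e2]
    have e3 : ∑ d ∈ Finset.Icc 1 L, (d : ℝ) * (-(2*(n:ℝ)) * a ((d : ℕ) : ZMod n))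
        = -(2*(n:ℝ)) * ∑ d ∈ Finset.Icc 1 L, (d : ℝ) * a ((d : ℕ) : ZMod n) := by
      rw [Finset.mul_sum]
      exact Finset.sum_congr rfl fun d _ => by ring
    rw [e3, hsum2, mul_zero]
  refine ⟨fun k => -(2 * (n : ℝ)) * a (((k : ℕ) + 1 : ℕ) : ZMod n), hc1', hc2', ?_⟩
  show A = ∑ k : Fin L, (-(2 * (n : ℝ)) * a (((k : ℕ) + 1 : ℕ) : ZMod n))
    • Amat n (((k : ℕ) + 1 : ℕ) : ZMod n)
  ext i j
  rw [Matrix.sum_apply, hcirc i j]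
  set t := j - i with htdef
  set v := t.val with hv
  have ht : t = ((v : ℕ) : ZMod n) := (ZMod.natCast_rightInverse t).symm
  have hvlt : v < n := ZMod.val_lt t
  have hij : (i = j) ↔ v = 0 := by
    rw [hv, ZMod.val_eq_zero, htdef, sub_eq_zero, eq_comm]
  have hnegt : -t = ((n - v : ℕ) : ZMod n) := by
    rw [Nat.cast_sub hvlt.le, ZMod.natCast_self, ht]
    ring
  have hij' : i - j = -t := by rw [htdef]; ring
  have hentry : ∀ k : Fin L, ((-(2 * (n : ℝ)) * a (((k : ℕ) + 1 : ℕ) : ZMod n))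
        • Amat n (((k : ℕ) + 1 : ℕ) : ZMod n)) i j
      = (-(2 * (n : ℝ)) * a (((k : ℕ) + 1 : ℕ) : ZMod n)) * ((n:ℝ)⁻¹ *
        ((if i = j then (1:ℝ) else 0)
          - 2⁻¹ * (if t = (((k : ℕ) + 1 : ℕ) : ZMod n) then 1 else 0)
          - 2⁻¹ * (if -t = (((k : ℕ) + 1 : ℕ) : ZMod n) then 1 else 0))) := by
    intro k
    rw [Matrix.smul_apply, Amat_apply, smul_eq_mul, ← htdef, hij']
  rw [Finset.sum_congr rfl fun k _ => hentry k]
  by_cases hv0 : v = 0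
  · -- diagonal
    have ht0 : t = 0 := by rw [ht, hv0, Nat.cast_zero]
    have : ∀ k : Fin L, (-(2 * (n : ℝ)) * a (((k : ℕ) + 1 : ℕ) : ZMod n)) * ((n:ℝ)⁻¹ *
        ((if i = j then (1:ℝ) else 0)
          - 2⁻¹ * (if t = (((k : ℕ) + 1 : ℕ) : ZMod n) then 1 else 0)
          - 2⁻¹ * (if -t = (((k : ℕ) + 1 : ℕ) : ZMod n) then 1 else 0)))
        = (-(2 * (n : ℝ)) * a (((k : ℕ) + 1 : ℕ) : ZMod n)) * (n:ℝ)⁻¹ := by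
      intro k
      have hk : (((k : ℕ) + 1 : ℕ) : ZMod n) ≠ 0 := by
        intro h
        have h2 : (((k : ℕ) + 1 : ℕ) : ZMod n) = ((0 : ℕ) : ZMod n) := by simpa using h
        have := (cast_eq_iff_lt (a := (k : ℕ) + 1) (b := 0)
          (by have := k.2; omega) (by omega)).1 h2
        omega
      rw [if_pos (hij.2 hv0), if_neg (by rw [ht0]; exact fun h => hk h.symm),
        if_neg (by rw [ht0, neg_zero]; exact fun h => hk h.symm)]
      ring
    rw [Finset.sum_congr rfl fun k _ => this k, ← Finset.sum_mul, hc1', one_mul, ht0, ha0]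
  · have hv1 : 1 ≤ v := by omega
    by_cases hvL : v ≤ L
    · -- short range : single survivor k₀ = v - 1
      have hk₀ : v - 1 < L := by omega
      rw [Finset.sum_eq_single (⟨v - 1, hk₀⟩ : Fin L)]
      · have hvv : ((⟨v - 1, hk₀⟩ : Fin L) : ℕ) + 1 = v := by simp; omega
        rw [hvv, if_neg (fun h => hv0 (hij.1 h)), if_pos ht,
          if_neg (by
            rw [hnegt]
            intro h
            have := (cast_eq_iff_lt (a := n - v) (b := v) (by omega) (by omega)).1 h
            omega)]
        rw [ht]
        field_simp
        ring
      · intro k _ hk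
        have hkv : (k : ℕ) + 1 ≠ v := by
          intro h
          apply hk
          apply Fin.ext
          simp
          omega
        rw [if_neg (fun h => hv0 (hij.1 h)),
          if_neg (by
            rw [ht]
            intro h
            exact hkv ((cast_eq_iff_lt hvlt (by have := k.2; omega)).1 h).symm),
          if_neg (by
            rw [hnegt]
            intro h
            have := (cast_eq_iff_lt (a := n - v) (by omega) (by have := k.2; omega)).1 h
            have := k.2
            omega)]
        ring
      · intro h; exact absurd (Finset.mem_univ _) h
    · by_cases hvH : v < n - L
      · -- middle range : all zero
        have : ∀ k : Fin L, (-(2 * (n : ℝ)) * a (((k : ℕ) + 1 : ℕ) : ZMod n)) * ((n:ℝ)⁻¹ *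
            ((if i = j then (1:ℝ) else 0)
              - 2⁻¹ * (if t = (((k : ℕ) + 1 : ℕ) : ZMod n) then 1 else 0)
              - 2⁻¹ * (if -t = (((k : ℕ) + 1 : ℕ) : ZMod n) then 1 else 0))) = 0 := by
          intro k
          rw [if_neg (fun h => hv0 (hij.1 h)),
            if_neg (by
              rw [ht]
              intro h
              have := (cast_eq_iff_lt hvlt (by have := k.2; omega)).1 h
              have := k.2
              omega),
            if_neg (by
              rw [hnegt]
              intro h
              have := (cast_eq_iff_lt (a := n - v) (by omega) (by have := k.2; omega)).1 h
              have := k.2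
              omega)]
          ring
        rw [Finset.sum_congr rfl fun k _ => this k, Finset.sum_const, smul_zero, ht,
          hvan v (by omega) (by omega)]
      · -- high range : single survivor k₀ = n - v - 1
        have hnv1 : 1 ≤ n - v := by omega
        have hnvL : n - v ≤ L := by omega
        have hk₀ : n - v - 1 < L := by omega
        rw [Finset.sum_eq_single (⟨n - v - 1, hk₀⟩ : Fin L)]
        · have hvv : ((⟨n - v - 1, hk₀⟩ : Fin L) : ℕ) + 1 = n - v := by simp; omega
          rw [hvv, if_neg (fun h => hv0 (hij.1 h)),
            if_neg (by
              rw [ht]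
              intro h
              have := (cast_eq_iff_lt hvlt (by omega)).1 h
              omega),
            if_pos hnegt]
          have hat : a t = a ((n - v : ℕ) : ZMod n) := by
            rw [← hnegt, hsymm' t]
          rw [hat]
          field_simp
          ring
        · intro k _ hk
          have hkv : (k : ℕ) + 1 ≠ n - v := by
            intro h
            apply hk
            apply Fin.ext
            simp
            omega
          rw [if_neg (fun h => hv0 (hij.1 h)),
            if_neg (by
              rw [ht]
              intro h
              have := (cast_eq_iff_lt hvlt (by have := k.2; omega)).1 h
              have := k.2
              omega),
            if_neg (by
              rw [hnegt]
              intro h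
              exact hkv ((cast_eq_iff_lt (a := n - v) (by omega) (by have := k.2; omega)).1 h).symm)]
          ring
        · intro h; exact absurd (Finset.mem_univ _) h

theorem equivariant_unbiased_iff_combination
    (n L : ℕ) [NeZero n] (hL : 2 ≤ L) (hn : 2 * L + 2 ≤ n) :
    (∀ A : Matrix (ZMod n) (ZMod n) ℝ, A.IsSymm →
      (((∀ k : ZMod n, (Cmat n k)ᵀ * A * Cmat n k = A) ∧ A.trace = 1 ∧
          (∀ θ : ZMod n → ℝ, L ≤ cycMinSeg n (fun i : ℤ => θ (i : ZMod n)) →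
            θ ⬝ᵥ A.mulVec θ = 0))
        ↔ (∃ c : Fin L → ℝ, (∑ k : Fin L, c k = 1) ∧
            (∑ k : Fin L, ((k : ℕ) + 1 : ℝ) * c k = 0) ∧
            A = ∑ k : Fin L, c k • Amat n (((k : ℕ) + 1 : ℕ) : ZMod n)))) ∧
    (∀ q : (ZMod n → ℝ) → ℝ,
      ((∃ A : Matrix (ZMod n) (ZMod n) ℝ, A.IsSymm ∧
          (∀ k : ZMod n, (Cmat n k)ᵀ * A * Cmat n k = A) ∧ A.trace = 1 ∧
          (∀ θ : ZMod n → ℝ, L ≤ cycMinSeg n (fun i : ℤ => θ (i : ZMod n)) →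
            θ ⬝ᵥ A.mulVec θ = 0) ∧
          q = fun X => X ⬝ᵥ A.mulVec X)
        ↔ (∃ c : Fin L → ℝ, (∑ k : Fin L, c k = 1) ∧
            (∑ k : Fin L, ((k : ℕ) + 1 : ℝ) * c k = 0) ∧
            q = fun X => ∑ k : Fin L,
              c k * (X ⬝ᵥ (Amat n (((k : ℕ) + 1 : ℕ) : ZMod n)).mulVec X)))) := by
  have hLn : L < n := by omega
  constructor
  · intro A hsymm
    constructor
    · rintro ⟨hconj, htr, hunb⟩
      exact necessity hL hn A hsymm hconj htr hunb
    · rintro ⟨c, hc1, hc2, rfl⟩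
      exact ⟨suff_conj c, suff_trace hLn c hc1, fun θ hθ => suff_unbiased hLn c hc2 θ hθ⟩
  · intro q
    constructor
    · rintro ⟨A, hsymm, hconj, htr, hunb, rfl⟩
      obtain ⟨c, hc1, hc2, hA⟩ := necessity hL hn A hsymm hconj htr hunb
      refine ⟨c, hc1, hc2, ?_⟩
      funext X
      rw [hA, quad_sum]
    · rintro ⟨c, hc1, hc2, rfl⟩
      refine ⟨∑ k : Fin L, c k • Amat n (((k : ℕ) + 1 : ℕ) : ZMod n), suff_symm c, suff_conj c,
        suff_trace hLn c hc1, fun θ hθ => suff_unbiased hLn c hc2 θ hθ, ?_⟩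
      funext X
      rw [quad_sum]
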